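/- Let f: ℝⁿ → ℝ ∪ {±∞} with x̄ ∈ dom f. The directional singular subdifferential defined with regular subgradients equals the one defined with limiting subgradients: ∂^∞ f(x̄; u) = {ξ : ∃ xₖ →ᵘ x̄, τₖ ↓ 0, ξₖ with τₖξₖ → ξ, f(xₖ) → f(x̄), and ξₖ ∈ ∂f(xₖ)}, where ∂f denotes the limiting subdifferential. -/

import Mathlib

open Filter Topology

noncomputable section

abbrev Euc (n : ℕ) := EuclideanSpace ℝ (Fin n)

/-- The directional neighborhood 𝒱_{ε,δ}(d). -/
def dirNbhd {n : ℕ} (ε δ : ℝ) (d : Euc n) : Set (Euc n) :=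
  {z | ‖z‖ < ε ∧ ‖‖d‖ • z - ‖z‖ • d‖ ≤ δ * (‖z‖ * ‖d‖)}

/-- The translated directional neighborhood xb + 𝒱_{ε,δ}(d). -/
def dirNbhdPt {n : ℕ} (xb : Euc n) (ε δ : ℝ) (d : Euc n) : Set (Euc n) :=
  (fun z => xb + z) '' dirNbhd ε δ d

/-- xₖ → xb in direction u : xₖ = xb + tₖ • uₖ with tₖ ↓ 0, uₖ → u. -/
def TendstoDir {n : ℕ} (x : ℕ → Euc n) (xb u : Euc n) : Prop :=
  ∃ t : ℕ → ℝ, ∃ v : ℕ → Euc n,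
    (∀ k, 0 < t k) ∧ Tendsto t atTop (𝓝 0) ∧ Tendsto v atTop (𝓝 u) ∧
    ∀ k, x k = xb + t k • v k

/-- The tangent (contingent) cone. -/
def tangentConeSeq {n : ℕ} (Ω : Set (Euc n)) (xb : Euc n) : Set (Euc n) :=
  {d | ∃ t : ℕ → ℝ, ∃ dk : ℕ → Euc n,
    (∀ k, 0 < t k) ∧ Tendsto t atTop (𝓝 0) ∧ Tendsto dk atTop (𝓝 d) ∧
    ∀ k, xb + t k • dk k ∈ Ω}

/-- The regular (Fréchet) normal cone; empty at points outside Ω. -/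
def regNormal {n : ℕ} (Ω : Set (Euc n)) (x : Euc n) : Set (Euc n) :=
  {ζ | x ∈ Ω ∧ ∀ ε > (0:ℝ), ∃ ρ > (0:ℝ), ∀ y ∈ Ω, ‖y - x‖ < ρ →
    (@inner ℝ _ _ ζ (y - x)) ≤ ε * ‖y - x‖}

/-- The limiting (Mordukhovich) normal cone. -/
def limNormal {n : ℕ} (Ω : Set (Euc n)) (xb : Euc n) : Set (Euc n) :=
  {ζ | ∃ xk : ℕ → Euc n, ∃ ζk : ℕ → Euc n,
    Tendsto xk atTop (𝓝 xb) ∧ Tendsto ζk atTop (𝓝 ζ) ∧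
    ∀ k, ζk k ∈ regNormal Ω (xk k)}

/-- The directional limiting normal cone N_Ω(xb; d). -/
def dirNormal {n : ℕ} (Ω : Set (Euc n)) (xb d : Euc n) : Set (Euc n) :=
  {ζ | ∃ t : ℕ → ℝ, ∃ dk ζk : ℕ → Euc n,
    (∀ k, 0 < t k) ∧ Tendsto t atTop (𝓝 0) ∧ Tendsto dk atTop (𝓝 d) ∧
    Tendsto ζk atTop (𝓝 ζ) ∧ ∀ k, ζk k ∈ regNormal Ω (xb + t k • dk k)}

/-- The regular (Fréchet) subdifferential of an extended-real-valued function. -/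
def regSubdiff {n : ℕ} (f : Euc n → EReal) (x : Euc n) : Set (Euc n) :=
  {ξ | ∀ ε > (0:ℝ), ∃ ρ > (0:ℝ), ∀ y, ‖y - x‖ < ρ →
    f x + (((@inner ℝ _ _ ξ (y - x)) - ε * ‖y - x‖ : ℝ) : EReal) ≤ f y}

/-- The limiting (Mordukhovich) subdifferential. -/
def limSubdiff {n : ℕ} (f : Euc n → EReal) (x : Euc n) : Set (Euc n) :=
  {ξ | ∃ xk ξk : ℕ → Euc n, Tendsto xk atTop (𝓝 x) ∧
    Tendsto (fun k => f (xk k)) atTop (𝓝 (f x)) ∧ Tendsto ξk atTop (𝓝 ξ) ∧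
    ∀ k, ξk k ∈ regSubdiff f (xk k)}

/-- The directional limiting subdifferential ∂f(xb; u). -/
def dirLimSubdiff {n : ℕ} (f : Euc n → EReal) (xb u : Euc n) : Set (Euc n) :=
  {ξ | ∃ xk ξk : ℕ → Euc n, TendstoDir xk xb u ∧
    Tendsto (fun k => f (xk k)) atTop (𝓝 (f xb)) ∧ Tendsto ξk atTop (𝓝 ξ) ∧
    ∀ k, ξk k ∈ regSubdiff f (xk k)}

/-- The directional singular subdifferential ∂^∞ f(xb; u). -/
def dirSingSubdiff {n : ℕ} (f : Euc n → EReal) (xb u : Euc n) : Set (Euc n) :=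
  {ξ | ∃ xk ξk : ℕ → Euc n, ∃ τ : ℕ → ℝ, TendstoDir xk xb u ∧
    (∀ k, 0 < τ k) ∧ Tendsto τ atTop (𝓝 0) ∧
    Tendsto (fun k => τ k • ξk k) atTop (𝓝 ξ) ∧
    Tendsto (fun k => f (xk k)) atTop (𝓝 (f xb)) ∧
    ∀ k, ξk k ∈ regSubdiff f (xk k)}

/-- f is continuous at xb in direction u. -/
def DirContinuous {n : ℕ} (f : Euc n → EReal) (xb u : Euc n) : Prop :=
  ∀ xk : ℕ → Euc n, TendstoDir xk xb u →
    Tendsto (fun k => f (xk k)) atTop (𝓝 (f xb))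

/-- f is locally lower semicontinuous at xb in direction u (with f xb = fx ∈ ℝ). -/
def DirLocLSC {n : ℕ} (f : Euc n → EReal) (xb u : Euc n) (fx : ℝ) : Prop :=
  ∃ ε > (0:ℝ), ∃ δ > (0:ℝ), IsClosed
    ({p : Euc n × ℝ | f p.1 ≤ (p.2 : EReal)} ∩
     (closure (dirNbhdPt xb ε δ u) ×ˢ Metric.closedBall fx ε))

/-- f is Lipschitz continuous around xb in direction u. -/
def DirLipschitz {n : ℕ} (f : Euc n → EReal) (xb u : Euc n) : Prop :=
  ∃ L : ℝ, ∃ ε > (0:ℝ), ∃ δ > (0:ℝ),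
    ∀ a ∈ dirNbhdPt xb ε δ u, ∀ b ∈ dirNbhdPt xb ε δ u,
      ∃ fa fb : ℝ, f a = (fa : EReal) ∧ f b = (fb : EReal) ∧
        |fa - fb| ≤ L * ‖a - b‖

/-- The optimal value function of the parametric problem min f(x,y) s.t. P(x,y) ∈ Γ. -/
def valueFn {n m p : ℕ} (f : Euc n × Euc m → ℝ) (P : Euc n × Euc m → Euc p)
    (Γ : Set (Euc p)) (x : Euc n) : EReal :=
  sInf ((fun y => ((f (x, y) : ℝ) : EReal)) '' {y | P (x, y) ∈ Γ})

/-- The solution map of the parametric problem. -/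
def solnSet {n m p : ℕ} (f : Euc n × Euc m → ℝ) (P : Euc n × Euc m → Euc p)
    (Γ : Set (Euc p)) (x : Euc n) : Set (Euc m) :=
  {y | P (x, y) ∈ Γ ∧ ((f (x, y) : ℝ) : EReal) = valueFn f P Γ x}

/-- The graphical derivative of φ at x in direction u. -/
def graphDeriv {n m : ℕ} (φ : Euc n → Euc m) (x u : Euc n) : Set (Euc m) :=
  {d | ∃ t : ℕ → ℝ, ∃ uk : ℕ → Euc n, (∀ k, 0 < t k) ∧ Tendsto t atTop (𝓝 0) ∧
    Tendsto uk atTop (𝓝 u) ∧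
    Tendsto (fun k => (t k)⁻¹ • (φ (x + t k • uk k) - φ x)) atTop (𝓝 d)}

end
theorem stmt_6 {n : ℕ} (f : Euc n → EReal) (xb u : Euc n) (hdom : f xb ≠ ⊤) :
    dirSingSubdiff f xb u =
      {ξ | ∃ xk ξk : ℕ → Euc n, ∃ τ : ℕ → ℝ, TendstoDir xk xb u ∧
        (∀ k, 0 < τ k) ∧ Tendsto τ atTop (𝓝 0) ∧
        Tendsto (fun k => τ k • ξk k) atTop (𝓝 ξ) ∧
        Tendsto (fun k => f (xk k)) atTop (𝓝 (f xb)) ∧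
        ∀ k, ξk k ∈ limSubdiff f (xk k)} := by
  letI : MetricSpace EReal := TopologicalSpace.metrizableSpaceMetric EReal
  ext ξ
  constructor
  · rintro ⟨xk, ξk, τ, h1, h2, h3, h4, h5, h6⟩
    exact ⟨xk, ξk, τ, h1, h2, h3, h4, h5, fun k =>
      ⟨fun _ => xk k, fun _ => ξk k, tendsto_const_nhds, tendsto_const_nhds,
        tendsto_const_nhds, fun _ => h6 k⟩⟩
  · rintro ⟨xk, ξk, τ, ⟨t, v, ht, ht0, hv, hxk⟩, hτ, hτ0, hτξ, hfx, h6⟩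
    choose a b ha hfa hb hreg using h6
    have hsel : ∀ k : ℕ, ∃ j, ‖a k j - xk k‖ < t k / (k + 1) ∧
        ‖b k j - ξk k‖ < 1 / (k + 1) ∧ dist (f (a k j)) (f (xk k)) < 1 / (k + 1) := by
      intro k
      have hpos1 : (0:ℝ) < t k / (k + 1) := div_pos (ht k) (by positivity)
      have hpos2 : (0:ℝ) < 1 / (k + 1) := by positivity
      have e1 : ∀ᶠ j in atTop, ‖a k j - xk k‖ < t k / (k + 1) := by
        have := (ha k).eventually (Metric.ball_mem_nhds (xk k) hpos1)
        filter_upwards [this] with j hj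
        simpa [dist_eq_norm] using hj
      have e2 : ∀ᶠ j in atTop, ‖b k j - ξk k‖ < 1 / (k + 1) := by
        have := (hb k).eventually (Metric.ball_mem_nhds (ξk k) hpos2)
        filter_upwards [this] with j hj
        simpa [dist_eq_norm] using hj
      have e3 : ∀ᶠ j in atTop, dist (f (a k j)) (f (xk k)) < 1 / (k + 1) := by
        have := (hfa k).eventually (Metric.ball_mem_nhds (f (xk k)) hpos2)
        filter_upwards [this] with j hj
        simpa [Metric.mem_ball] using hj
      exact ((e1.and (e2.and e3)).exists).imp (fun j hj => ⟨hj.1, hj.2.1, hj.2.2⟩)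
    choose j hj1 hj2 hj3 using hsel
    set x' : ℕ → Euc n := fun k => a k (j k) with hx'
    set ξ' : ℕ → Euc n := fun k => b k (j k) with hξ'
    have hlim : Tendsto (fun k : ℕ => 1 / ((k:ℝ) + 1)) atTop (𝓝 0) :=
      tendsto_one_div_add_atTop_nhds_zero_nat
    refine ⟨x', ξ', τ, ?_, hτ, hτ0, ?_, ?_, fun k => hreg k (j k)⟩
    · -- TendstoDir
      refine ⟨t, fun k => v k + (t k)⁻¹ • (x' k - xk k), ht, ht0, ?_, ?_⟩
      · have hd : Tendsto (fun k => (t k)⁻¹ • (x' k - xk k)) atTop (𝓝 0) := by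
          apply squeeze_zero_norm (a := fun k : ℕ => 1 / ((k:ℝ) + 1)) _ hlim
          intro k
          have : ‖(t k)⁻¹ • (x' k - xk k)‖ = (t k)⁻¹ * ‖x' k - xk k‖ := by
            rw [norm_smul, Real.norm_eq_abs, abs_of_pos (inv_pos.2 (ht k))]
          rw [this]
          have hle : ‖x' k - xk k‖ ≤ t k / (k + 1) := (hj1 k).le
          calc (t k)⁻¹ * ‖x' k - xk k‖ ≤ (t k)⁻¹ * (t k / (k + 1)) := by
                exact mul_le_mul_of_nonneg_left hle (inv_pos.2 (ht k)).le
            _ = 1 / (k + 1) := by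
                rw [mul_div_assoc', inv_mul_cancel₀ (ht k).ne']
        have := hv.add hd
        simpa using this
      · intro k
        rw [smul_add, smul_inv_smul₀ (ht k).ne', ← add_assoc, ← hxk k]
        abel
    · -- τ • ξ' → ξ
      have hd : Tendsto (fun k => τ k • (ξ' k - ξk k)) atTop (𝓝 0) := by
        apply squeeze_zero_norm (a := τ) _ hτ0
        intro k
        have : ‖τ k • (ξ' k - ξk k)‖ = τ k * ‖ξ' k - ξk k‖ := by
          rw [norm_smul, Real.norm_eq_abs, abs_of_pos (hτ k)]
        rw [this]
        calc τ k * ‖ξ' k - ξk k‖ ≤ τ k * (1 / (k + 1)) :=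
              mul_le_mul_of_nonneg_left (hj2 k).le (hτ k).le
          _ ≤ τ k * 1 := by
              apply mul_le_mul_of_nonneg_left _ (hτ k).le
              rw [div_le_one (by positivity)]
              linarith [(Nat.cast_nonneg k : (0:ℝ) ≤ k)]
          _ = τ k := mul_one _
      have := hτξ.add hd
      simp only [smul_sub] at this
      simpa using this
    · -- f x' → f xb
      rw [tendsto_iff_dist_tendsto_zero]
      apply squeeze_zero (fun k => dist_nonneg)
        (g := fun k : ℕ => 1 / ((k:ℝ) + 1) + dist (f (xk k)) (f xb))
      · intro k
        calc dist (f (x' k)) (f xb) ≤ dist (f (x' k)) (f (xk k)) + dist (f (xk k)) (f xb) :=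
              dist_triangle _ _ _
          _ ≤ 1 / (k + 1) + dist (f (xk k)) (f xb) := by
              exact add_le_add (hj3 k).le le_rfl
      · have := hlim.add (tendsto_iff_dist_tendsto_zero.1 hfx)
        simpa using this
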